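/- For any two distinct irrational real numbers α and β, there exists a matrix g = [[a,b],[c,d]] in the theta group Θ such that the pair ((aα+b)/(cα+d), (aβ+b)/(cβ+d)) lies in 𝓘 := (1,∞) × [−√3, −√3+2) ∪ (−∞,−1) × (√3−2, √3]. -/

import Mathlib

open MeasureTheory Real Set Filter Topology

namespace SCF

/-- The involution `ι(x) = (1−x)/(1+x)`. -/
noncomputable def iota (x : ℝ) : ℝ := (1 - x) / (1 + x)

/-- Even continued-fraction step.  For `y ∈ (0,1/2]` one has
`⌊(1/y+1)/2⌋ = k` whenever `1/y ∈ (2k−1, 2k+1)`, so `Te y = |1/y − 2k|`;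
explicitly `Te y = 1/y − 2` on `[1/3,1/2]`, `Te y = 1/y − 2k` on
`[1/(2k+1), 1/(2k))` and `Te y = 2k − 1/y` on `[1/(2k), 1/(2k−1))` (`k ≥ 2`). -/
noncomputable def Te (y : ℝ) : ℝ := |1 / y - 2 * (⌊(1 / y + 1) / 2⌋ : ℝ)|

/-- The spliced continued fraction (SCF) map `T : [0,1] → [0,1]`, with
`T 0 = 0`, `T 1 = 1`.  On `(0,1/2]` it is the even continued fraction map
(see `Te`), and on `(1/2,1)` it is the odd–odd map, which is the conjugate
`ι ∘ Te ∘ ι` of the even map; this agrees with the branchwise definition: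
`T x = (k x − (k−1))/(k − (k+1) x)` on `((k−1)/k, (2k−1)/(2k+1)]` and
`T x = (k − (k+1) x)/(k x − (k−1))` on `((2k−1)/(2k+1), k/(k+1)]` for `k ≥ 2`. -/
noncomputable def T (x : ℝ) : ℝ :=
  if x ≤ 0 then 0
  else if 1 ≤ x then 1
  else if x ≤ 1 / 2 then Te x
  else iota (Te (iota x))

/-- Parity label of a digit: `e` (even cusp) or `o` (odd–odd cusp). -/
inductive Par | e | o
deriving DecidableEq

/-- A candidate SCF digit `(a, ε)_s`. -/
structure Digit where
  a : ℤ
  eps : ℤ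
  s : Par
deriving DecidableEq

/-- The digit set `𝒜 = {(k,ε)_s : k ≥ 2, ε = ±1, s ∈ {e,o}} ∪ {(1,+1)_e}`. -/
def Digit.Valid (d : Digit) : Prop :=
  (2 ≤ d.a ∧ (d.eps = 1 ∨ d.eps = -1)) ∨ (d.a = 1 ∧ d.eps = 1 ∧ d.s = Par.e)

/-- The branch intervals `I_{(a,ε)_s}` of the SCF map. -/
noncomputable def branch (d : Digit) : Set ℝ :=
  match d.s with
  | Par.e =>
      if d.a = 1 then Set.Icc (1/3 : ℝ) (1/2)
      else if d.eps = 1 then Set.Ico (1 / (2 * (d.a : ℝ) + 1)) (1 / (2 * (d.a : ℝ)))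
      else Set.Ico (1 / (2 * (d.a : ℝ))) (1 / (2 * (d.a : ℝ) - 1))
  | Par.o =>
      if d.eps = 1 then
        Set.Ioc ((2 * (d.a : ℝ) - 1) / (2 * (d.a : ℝ) + 1)) ((d.a : ℝ) / ((d.a : ℝ) + 1))
      else
        Set.Ioc (((d.a : ℝ) - 1) / (d.a : ℝ)) ((2 * (d.a : ℝ) - 1) / (2 * (d.a : ℝ) + 1))

open Classical in
/-- The SCF digit of a point `y` (the unique valid digit `d` with `y ∈ I_d`;
well defined for every `y ∈ (0,1)`). -/
noncomputable def digit (y : ℝ) : Digit :=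
  if h : ∃ d : Digit, d.Valid ∧ y ∈ branch d then h.choose else ⟨1, 1, Par.e⟩

/-- The `n`-th SCF digit `(a_n(x), ε_n(x))_{s_n(x)}` of `x`, `n ≥ 1`,
determined by `T^[n−1] x ∈ I_{(a_n,ε_n)_{s_n}}`. -/
noncomputable def dig (n : ℕ) (x : ℝ) : Digit := digit (T^[n - 1] x)

/-- The `n`-th SCF partial quotient `a_n(x)`. -/
noncomputable def a (n : ℕ) (x : ℝ) : ℤ := (dig n x).a

/-- The invariant density `f_μ`. -/
noncomputable def fdens (x : ℝ) : ℝ :=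
  2 / (Real.log (2 + Real.sqrt 3) * (1 - (2 - Real.sqrt 3) * x) * (1 + Real.sqrt 3 * x))

/-- The absolutely continuous `T`-invariant probability measure `μ` on `(0,1)`. -/
noncomputable def mu : Measure ℝ :=
  (volume.restrict (Set.Ioo (0 : ℝ) 1)).withDensity fun x => ENNReal.ofReal (fdens x)

/-- The inverse branches `h_{(a,ε)_s}` of the SCF map `T`. -/
noncomputable def h (d : Digit) (x : ℝ) : ℝ :=
  match d.s with
  | Par.e => 1 / (2 * (d.a : ℝ) + (d.eps : ℝ) * x)
  | Par.o =>
      if d.eps = 1 then (((d.a : ℝ) - 1) * x + (d.a : ℝ)) / ((d.a : ℝ) * x + ((d.a : ℝ) + 1))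
      else ((d.a : ℝ) * x + ((d.a : ℝ) - 1)) / (((d.a : ℝ) + 1) * x + (d.a : ℝ))

/-- Composed inverse branch `h_{A^{(n)}} = h_{A₁} ∘ ⋯ ∘ h_{A_n}` of a word. -/
noncomputable def hWord (l : List Digit) : ℝ → ℝ :=
  l.foldr (fun d g => h d ∘ g) id

/-- The dual inverse branches `bar h_{(b,η)_t}`. -/
noncomputable def hbar (d : Digit) (y : ℝ) : ℝ :=
  match d.s with
  | Par.e => (d.eps : ℝ) / (2 * (d.a : ℝ) + y)
  | Par.o =>
      1 / (1 + (d.eps : ℝ) / (((d.a : ℝ) - ((max 0 d.eps : ℤ) : ℝ)) + 1 / (1 + y)))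

/-- The matrix `M_{(a,ε)_s}` associated with the inverse branch `h_{(a,ε)_s}`. -/
noncomputable def Mdig (d : Digit) : Matrix (Fin 2) (Fin 2) ℝ :=
  match d.s with
  | Par.e => !![0, 1; (d.eps : ℝ), 2 * (d.a : ℝ)]
  | Par.o =>
      !![(d.a : ℝ) - ((max 0 d.eps : ℤ) : ℝ), (d.a : ℝ) - ((max 0 d.eps : ℤ) : ℝ) + (d.eps : ℝ);
         (d.a : ℝ) - ((max 0 d.eps : ℤ) : ℝ) + 1, (d.a : ℝ) - ((max 0 d.eps : ℤ) : ℝ) + (d.eps : ℝ) + 1]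

/-- `M_n(x) = M_{(a₁,ε₁)_{s₁}} ⋯ M_{(a_n,ε_n)_{s_n}}`. -/
noncomputable def Mn (n : ℕ) (x : ℝ) : Matrix (Fin 2) (Fin 2) ℝ :=
  ((List.range n).map fun i => Mdig (digit (T^[i] x))).prod

/-- `P_n(x)`: the `(1,2)`-entry of `M_n(x)` (numerator of the `n`-th convergent). -/
noncomputable def Pc (n : ℕ) (x : ℝ) : ℝ := Mn n x 0 1

/-- `Q_n(x)`: the `(2,2)`-entry of `M_n(x)` (denominator of the `n`-th convergent). -/
noncomputable def Qc (n : ℕ) (x : ℝ) : ℝ := Mn n x 1 1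


/-- The theta group Θ: integer matrices of determinant 1 congruent mod 2
either to the identity or to `[[0,−1],[1,0]]`. -/
def InTheta (g : Matrix (Fin 2) (Fin 2) ℤ) : Prop :=
  g.det = 1 ∧
    ((g 0 0 % 2 = 1 ∧ g 0 1 % 2 = 0 ∧ g 1 0 % 2 = 0 ∧ g 1 1 % 2 = 1) ∨
     (g 0 0 % 2 = 0 ∧ g 0 1 % 2 = 1 ∧ g 1 0 % 2 = 1 ∧ g 1 1 % 2 = 0))

/-- The region `𝓘 = (1,∞) × [−√3, −√3+2) ∪ (−∞,−1) × (√3−2, √3]`. -/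
noncomputable def calI : Set (ℝ × ℝ) :=
  (Set.Ioi (1 : ℝ)) ×ˢ (Set.Ico (-(Real.sqrt 3)) (-(Real.sqrt 3) + 2)) ∪
    (Set.Iio (-1 : ℝ)) ×ˢ (Set.Ioc (Real.sqrt 3 - 2) (Real.sqrt 3))

namespace TG

/-- Möbius action of an integer matrix. -/
noncomputable def mob (g : Matrix (Fin 2) (Fin 2) ℤ) (x : ℝ) : ℝ :=
  ((g 0 0 : ℝ) * x + (g 0 1 : ℝ)) / ((g 1 0 : ℝ) * x + (g 1 1 : ℝ))

def Amat (a : ℤ) : Matrix (Fin 2) (Fin 2) ℤ := !![0, -1; 1, -2*a]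

def Tmat (k : ℤ) : Matrix (Fin 2) (Fin 2) ℤ := !![1, k; 0, 1]

lemma emod2_addmul (x y z w : ℤ) :
    (x*y + z*w) % 2 = ((x%2)*(y%2) + (z%2)*(w%2)) % 2 := by
  rw [Int.add_emod, Int.mul_emod, Int.mul_emod z, ← Int.add_emod]

lemma intheta_one : InTheta 1 := by
  constructor
  · simp
  · left; simp [Matrix.one_apply]

lemma intheta_A (a : ℤ) : InTheta (Amat a) := by
  constructor
  · simp [Amat, Matrix.det_fin_two_of]
  · right
    simp [Amat, Matrix.cons_val_one, Matrix.head_cons]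

lemma intheta_T (k : ℤ) (hk : k % 2 = 0) : InTheta (Tmat k) := by
  constructor
  · simp [Tmat, Matrix.det_fin_two_of]
  · left
    simp [Tmat, Matrix.cons_val_one, Matrix.head_cons, hk]

lemma mul_entries (g h : Matrix (Fin 2) (Fin 2) ℤ) (i j : Fin 2) :
    (g * h) i j = g i 0 * h 0 j + g i 1 * h 1 j := by
  rw [Matrix.mul_apply, Fin.sum_univ_two]

lemma intheta_mul {g h : Matrix (Fin 2) (Fin 2) ℤ} (hg : InTheta g) (hh : InTheta h) :
    InTheta (g * h) := by
  obtain ⟨hgd, hgp⟩ := hg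
  obtain ⟨hhd, hhp⟩ := hh
  constructor
  · rw [Matrix.det_mul, hgd, hhd, mul_one]
  · simp only [mul_entries]
    rcases hgp with ⟨h1, h2, h3, h4⟩ | ⟨h1, h2, h3, h4⟩ <;>
      rcases hhp with ⟨k1, k2, k3, k4⟩ | ⟨k1, k2, k3, k4⟩
    · left
      refine ⟨?_, ?_, ?_, ?_⟩ <;>
        · rw [emod2_addmul]; simp only [h1, h2, h3, h4, k1, k2, k3, k4]; norm_num
    · right
      refine ⟨?_, ?_, ?_, ?_⟩ <;>
        · rw [emod2_addmul]; simp only [h1, h2, h3, h4, k1, k2, k3, k4]; norm_num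
    · right
      refine ⟨?_, ?_, ?_, ?_⟩ <;>
        · rw [emod2_addmul]; simp only [h1, h2, h3, h4, k1, k2, k3, k4]; norm_num
    · left
      refine ⟨?_, ?_, ?_, ?_⟩ <;>
        · rw [emod2_addmul]; simp only [h1, h2, h3, h4, k1, k2, k3, k4]; norm_num


lemma den_ne {g : Matrix (Fin 2) (Fin 2) ℤ} {x : ℝ} (hg : InTheta g) (hx : Irrational x) :
    (g 1 0 : ℝ) * x + (g 1 1 : ℝ) ≠ 0 := by
  intro h0
  by_cases hc : g 1 0 = 0
  · have h11 : (g 1 1 : ℝ) = 0 := by rw [hc] at h0; simpa using h0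
    have h11' : g 1 1 = 0 := by exact_mod_cast h11
    have hdet := hg.1
    rw [Matrix.det_fin_two, h11', hc] at hdet
    simp at hdet
  · have hc' : (g 1 0 : ℝ) ≠ 0 := by exact_mod_cast hc
    have hxval : x = ((((-(g 1 1)) : ℤ) : ℚ) / ((g 1 0 : ℤ) : ℚ) : ℚ) := by
      push_cast
      field_simp
      linarith [h0]
    exact hx ⟨_, hxval.symm⟩

lemma mob_num (B g : Matrix (Fin 2) (Fin 2) ℤ) (x : ℝ)
    (h1 : (g 1 0 : ℝ) * x + (g 1 1 : ℝ) ≠ 0) :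
    ((B * g) 0 0 : ℝ) * x + ((B * g) 0 1 : ℝ)
      = ((B 0 0 : ℝ) * mob g x + (B 0 1 : ℝ)) * ((g 1 0 : ℝ) * x + (g 1 1 : ℝ)) := by
  simp only [mul_entries, mob]
  push_cast
  field_simp
  ring

lemma mob_den (B g : Matrix (Fin 2) (Fin 2) ℤ) (x : ℝ)
    (h1 : (g 1 0 : ℝ) * x + (g 1 1 : ℝ) ≠ 0) :
    ((B * g) 1 0 : ℝ) * x + ((B * g) 1 1 : ℝ)
      = ((B 1 0 : ℝ) * mob g x + (B 1 1 : ℝ)) * ((g 1 0 : ℝ) * x + (g 1 1 : ℝ)) := by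
  simp only [mul_entries, mob]
  push_cast
  field_simp
  ring

lemma mob_mul (B g : Matrix (Fin 2) (Fin 2) ℤ) (x : ℝ)
    (h1 : (g 1 0 : ℝ) * x + (g 1 1 : ℝ) ≠ 0)
    (h2 : (B 1 0 : ℝ) * mob g x + (B 1 1 : ℝ) ≠ 0) :
    mob (B * g) x = ((B 0 0 : ℝ) * mob g x + (B 0 1 : ℝ)) / ((B 1 0 : ℝ) * mob g x + (B 1 1 : ℝ)) := by
  rw [mob, mob_num B g x h1, mob_den B g x h1, mul_div_mul_right _ _ h1]

lemma Amat_entries (a : ℤ) : Amat a 0 0 = 0 ∧ Amat a 0 1 = -1 ∧ Amat a 1 0 = 1 ∧ Amat a 1 1 = -2*a := by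
  refine ⟨?_, ?_, ?_, ?_⟩ <;> simp [Amat, Matrix.cons_val_one, Matrix.head_cons]

lemma Tmat_entries (k : ℤ) : Tmat k 0 0 = 1 ∧ Tmat k 0 1 = k ∧ Tmat k 1 0 = 0 ∧ Tmat k 1 1 = 1 := by
  refine ⟨?_, ?_, ?_, ?_⟩ <;> simp [Tmat, Matrix.cons_val_one, Matrix.head_cons]

lemma mob_A {g : Matrix (Fin 2) (Fin 2) ℤ} {x : ℝ} (a : ℤ)
    (h1 : (g 1 0 : ℝ) * x + (g 1 1 : ℝ) ≠ 0) (ht : Irrational (mob g x)) :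
    mob (Amat a * g) x = -(mob g x - 2 * (a : ℝ))⁻¹ := by
  obtain ⟨e1, e2, e3, e4⟩ := Amat_entries a
  have hne : mob g x - 2 * (a : ℝ) ≠ 0 := by
    have : Irrational (mob g x - ((2*a : ℤ) : ℝ)) := ht.sub_intCast _
    intro h; apply this.ne_zero; push_cast; linarith
  have h2 : (Amat a 1 0 : ℝ) * mob g x + (Amat a 1 1 : ℝ) ≠ 0 := by
    rw [e3, e4]; push_cast; intro h; apply hne; linarith
  rw [mob_mul _ _ _ h1 h2, e1, e2, e3, e4]
  push_cast
  rw [show (0:ℝ) * mob g x + -1 = -1 by ring, show (1:ℝ) * mob g x + -2 * (a:ℝ) = mob g x - 2*(a:ℝ) by ring]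
  rw [neg_div, one_div]

lemma mob_T {g : Matrix (Fin 2) (Fin 2) ℤ} {x : ℝ} (k : ℤ)
    (h1 : (g 1 0 : ℝ) * x + (g 1 1 : ℝ) ≠ 0) :
    mob (Tmat k * g) x = mob g x + (k : ℝ) := by
  obtain ⟨e1, e2, e3, e4⟩ := Tmat_entries k
  have h2 : (Tmat k 1 0 : ℝ) * mob g x + (Tmat k 1 1 : ℝ) ≠ 0 := by
    rw [e3, e4]; norm_num
  rw [mob_mul _ _ _ h1 h2, e1, e2, e3, e4]
  push_cast
  simp

lemma irr_step {t : ℝ} (ht : Irrational t) (a : ℤ) : Irrational (-(t - 2 * (a : ℝ))⁻¹) := by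
  have h1 : Irrational (t - ((2*a : ℤ) : ℝ)) := ht.sub_intCast _
  have h2 := h1.inv.neg
  push_cast at h2
  convert h2 using 3 <;> ring

lemma round_abs_lt {t : ℝ} (ht : Irrational t) : |t - 2 * (round (t/2) : ℝ)| < 1 := by
  have h := abs_sub_round (t/2)
  have heq : |t - 2 * (round (t/2) : ℝ)| = 2 * |t/2 - (round (t/2) : ℝ)| := by
    rw [show t - 2 * (round (t/2) : ℝ) = 2 * (t/2 - (round (t/2) : ℝ)) by ring, abs_mul, abs_two]
  have hle : |t - 2 * (round (t/2) : ℝ)| ≤ 1 := by rw [heq]; linarith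
  have hirr : Irrational (t - ((2 * round (t/2) : ℤ) : ℝ)) := ht.sub_intCast _
  rcases lt_or_eq_of_le hle with h' | h'
  · exact h'
  · exfalso
    rcases (abs_eq (by norm_num : (0:ℝ) ≤ 1)).mp h' with h'' | h''
    · apply hirr.ne_int 1; push_cast; linarith
    · apply hirr.ne_int (-1); push_cast; linarith

noncomputable def seqX (x : ℝ) : ℕ → ℝ
  | 0 => x
  | n+1 => -((seqX x n) - 2 * (round (seqX x n / 2) : ℝ))⁻¹

noncomputable def seqY (x y : ℝ) : ℕ → ℝ
  | 0 => y
  | n+1 => -((seqY x y n) - 2 * (round (seqX x n / 2) : ℝ))⁻¹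

noncomputable def seqG (x : ℝ) : ℕ → Matrix (Fin 2) (Fin 2) ℤ
  | 0 => 1
  | n+1 => Amat (round (seqX x n / 2)) * seqG x n

lemma mob_one (x : ℝ) : mob 1 x = x := by
  simp [mob, Matrix.one_apply]

lemma invariant {x y : ℝ} (hx : Irrational x) (hy : Irrational y) (hxy : x ≠ y) :
    ∀ n, Irrational (seqX x n) ∧ Irrational (seqY x y n) ∧ seqX x n ≠ seqY x y n ∧
      InTheta (seqG x n) ∧ mob (seqG x n) x = seqX x n ∧ mob (seqG x n) y = seqY x y n := by
  intro n
  induction n with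
  | zero => exact ⟨hx, hy, hxy, intheta_one, mob_one x, mob_one y⟩
  | succ n ih =>
    obtain ⟨ht, hu, htu, hG, hmx, hmy⟩ := ih
    refine ⟨irr_step ht _, irr_step hu _, ?_, intheta_mul (intheta_A _) hG, ?_, ?_⟩
    · intro h
      apply htu
      have := inv_injective (neg_injective h)
      linarith [this]
    · rw [seqG, mob_A _ (den_ne hG hx) (hmx ▸ ht), hmx]
      rfl
    · rw [seqG, mob_A _ (den_ne hG hy) (hmy ▸ hu), hmy]
      rfl

lemma descent (v : ℕ → ℝ) (h : ∀ n, v (n+1) ≤ v n - 1) (hp : ∀ n, 0 < v n) : False := by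
  have key : ∀ n : ℕ, v n ≤ v 0 - n := by
    intro n
    induction n with
    | zero => simp
    | succ n ih =>
      have := h n
      push_cast
      push_cast at ih
      linarith
  obtain ⟨n, hn⟩ := exists_nat_gt (v 0)
  have := hp n
  have := key n
  linarith


lemma irr_shift {t : ℝ} (ht : Irrational t) (a : ℤ) : Irrational (t - 2 * (a : ℝ)) := by
  have := ht.sub_intCast (2*a)
  push_cast at this
  exact this

lemma one_lt_abs_step {r : ℝ} (h0 : r ≠ 0) (h1 : |r| < 1) : 1 < |(-(r⁻¹))| := by
  rw [abs_neg, abs_inv]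
  exact (one_lt_inv₀ (abs_pos.mpr h0)).mpr h1

lemma xabs_gt_one {x : ℝ} (hx : Irrational x) (n : ℕ) : 1 < |seqX x (n+1)| := by
  have ht : Irrational (seqX x n) := by
    induction n with
    | zero => exact hx
    | succ n ih => exact irr_step ih _
  have h0 : seqX x n - 2 * (round (seqX x n / 2) : ℝ) ≠ 0 := (irr_shift ht _).ne_zero
  have h1 := round_abs_lt ht
  exact one_lt_abs_step h0 h1

lemma prod_bound {r s : ℝ} (hr : |r| < 1) (hs : |s| < 1) (hrs : 0 < r * s) :
    |r * s| < 1 - |r - s| ∧ |r - s| < 1 := by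
  rcases lt_trichotomy r 0 with h | h | h
  · have hs0 : s < 0 := by nlinarith
    rw [abs_of_neg h] at hr
    rw [abs_of_neg hs0] at hs
    rw [abs_of_pos hrs]
    rcases le_total r s with hc | hc
    · rw [abs_of_nonpos (by linarith)]
      constructor <;> nlinarith
    · rw [abs_of_nonneg (by linarith)]
      constructor <;> nlinarith
  · exfalso; rw [h, zero_mul] at hrs; exact lt_irrefl 0 hrs
  · have hs0 : 0 < s := by nlinarith
    rw [abs_of_pos h] at hr
    rw [abs_of_pos hs0] at hs
    rw [abs_of_pos hrs]
    rcases le_total r s with hc | hc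
    · rw [abs_of_nonpos (by linarith)]
      constructor <;> nlinarith
    · rw [abs_of_nonneg (by linarith)]
      constructor <;> nlinarith

lemma diff_step {p q c : ℝ} (hp : p - c ≠ 0) (hq : q - c ≠ 0) :
    -((p - c)⁻¹) - -((q - c)⁻¹) = (p - q) / ((p - c) * (q - c)) := by
  field_simp
  ring

lemma lemA {x y : ℝ} (hx : Irrational x) (hy : Irrational y) (hxy : x ≠ y) :
    ∃ n, 1 ≤ n ∧ |seqY x y n| < 1 := by
  by_contra hcon
  push_neg at hcon
  have hY : ∀ n, 1 ≤ |seqY x y (n+1)| := fun n => hcon (n+1) (by omega)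
  -- abbreviations
  set X := seqX x with hXdef
  set Y := seqY x y with hYdef
  have inv := invariant hx hy hxy
  have hr : ∀ n, |X n - 2 * (round (X n / 2) : ℝ)| < 1 := fun n => round_abs_lt (inv n).1
  have hrne : ∀ n, X n - 2 * (round (X n / 2) : ℝ) ≠ 0 := fun n => (irr_shift (inv n).1 _).ne_zero
  have hsne : ∀ n, Y n - 2 * (round (X n / 2) : ℝ) ≠ 0 :=
    fun n => (irr_shift (inv n).2.1 _).ne_zero
  have hs : ∀ n, |Y n - 2 * (round (X n / 2) : ℝ)| < 1 := by
    intro n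
    have h1 : 1 ≤ |Y (n+1)| := hY n
    have h2 : Y (n+1) = -((Y n - 2 * (round (X n / 2) : ℝ))⁻¹) := rfl
    rw [h2, abs_neg, abs_inv] at h1
    set sn := Y n - 2 * (round (X n / 2) : ℝ)
    have hpos : 0 < |sn| := abs_pos.mpr (hsne n)
    have hle : |sn| ≤ 1 := by
      by_contra hgt
      push_neg at hgt
      have : |sn|⁻¹ < 1 := inv_lt_one_of_one_lt₀ hgt
      linarith
    rcases lt_or_eq_of_le hle with h' | h'
    · exact h'
    · exfalso
      have hirr : Irrational sn := irr_shift (inv n).2.1 _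
      rcases (abs_eq (by norm_num : (0:ℝ) ≤ 1)).mp h' with h'' | h''
      · exact hirr.ne_int 1 (by push_cast; linarith)
      · exact hirr.ne_int (-1) (by push_cast; linarith)
  have hu_ne : ∀ n, X n - Y n ≠ 0 := fun n => sub_ne_zero.mpr (inv n).2.2.1
  have hu_eq : ∀ n, X (n+1) - Y (n+1) =
      (X n - Y n) / ((X n - 2 * (round (X n / 2) : ℝ)) * (Y n - 2 * (round (X n / 2) : ℝ))) := by
    intro n
    have e1 : X (n+1) = -((X n - 2 * (round (X n / 2) : ℝ))⁻¹) := rfl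
    have e2 : Y (n+1) = -((Y n - 2 * (round (X n / 2) : ℝ))⁻¹) := rfl
    rw [e1, e2]
    exact diff_step (hrne n) (hsne n)
  have hprod_pos : ∀ n, 0 < (X n - 2 * (round (X n / 2) : ℝ)) * (Y n - 2 * (round (X n / 2) : ℝ)) := by
    intro n
    set rn := X n - 2 * (round (X n / 2) : ℝ)
    set sn := Y n - 2 * (round (X n / 2) : ℝ)
    rcases lt_trichotomy (rn * sn) 0 with hneg | hzero | hpos
    · exfalso
      -- opposite signs: |u n| = |rn| + |sn| and contradiction
      have hA : |X n - Y n| ≤ |rn| + |sn| := by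
        have : X n - Y n = rn - sn := by simp only [rn, sn]; ring
        rw [this]; exact abs_sub rn sn
      have hA2 : |X n - Y n| < 2 := lt_of_le_of_lt hA (by linarith [hr n, hs n])
      have hkey : 4 * |rn * sn| ≤ (X n - Y n)^2 := by
        have : X n - Y n = rn - sn := by simp only [rn, sn]; ring
        rw [this, abs_of_neg hneg]
        nlinarith [sq_nonneg (rn + sn)]
      have hC : |X (n+1) - Y (n+1)| = |X n - Y n| / |rn * sn| := by
        rw [hu_eq n, abs_div]
      have hC2 : |X (n+1) - Y (n+1)| < 2 := by
        have heq : X (n+1) - Y (n+1) = (X (n+1) - 2 * (round (X (n+1) / 2) : ℝ))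
            - (Y (n+1) - 2 * (round (X (n+1) / 2) : ℝ)) := by ring
        rw [heq]
        refine lt_of_le_of_lt (abs_sub _ _) ?_
        linarith [hr (n+1), hs (n+1)]
      have hBpos : 0 < |rn * sn| := abs_pos.mpr (mul_ne_zero (hrne n) (hsne n))
      have hApos : 0 < |X n - Y n| := abs_pos.mpr (hu_ne n)
      rw [hC] at hC2
      have hlt : |X n - Y n| < 2 * |rn * sn| := by
        rw [div_lt_iff₀ hBpos] at hC2; linarith
      nlinarith [sq_abs (X n - Y n)]
    · exact absurd hzero (mul_ne_zero (hrne n) (hsne n))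
    · exact hpos
  -- same sign: descent on (|u n|)⁻¹
  apply descent (fun n => |X n - Y n|⁻¹)
  · intro n
    show |X (n+1) - Y (n+1)|⁻¹ ≤ |X n - Y n|⁻¹ - 1
    set rn := X n - 2 * (round (X n / 2) : ℝ) with hrn
    set sn := Y n - 2 * (round (X n / 2) : ℝ) with hsn
    have hdiff : X n - Y n = rn - sn := by rw [hrn, hsn]; ring
    obtain ⟨hb1, hb2⟩ := prod_bound (hr n) (hs n) (hprod_pos n)
    have hApos : 0 < |X n - Y n| := abs_pos.mpr (hu_ne n)
    have hBpos : 0 < |rn * sn| := abs_pos.mpr (mul_ne_zero (hrne n) (hsne n))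
    have hC : |X (n+1) - Y (n+1)| = |X n - Y n| / |rn * sn| := by
      rw [hu_eq n, abs_div]
    have hA1 : |X n - Y n| < 1 := by rw [hdiff]; exact hb2
    have hB1 : |rn * sn| < 1 - |X n - Y n| := by
      have : |rn - sn| = |X n - Y n| := by rw [hdiff]
      rw [← this]; exact hb1
    rw [hC, inv_div, div_le_iff₀ hApos]
    have hinv : |X n - Y n|⁻¹ * |X n - Y n| = 1 := inv_mul_cancel₀ hApos.ne'
    nlinarith
  · intro n
    show (0:ℝ) < |X n - Y n|⁻¹
    exact inv_pos.mpr (abs_pos.mpr (hu_ne n))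


lemma mem_calI_left {p q : ℝ} (h1 : 1 < p) (h2 : -(Real.sqrt 3) ≤ q)
    (h3 : q < -(Real.sqrt 3) + 2) : (p, q) ∈ calI :=
  Or.inl ⟨h1, h2, h3⟩

lemma mem_calI_right {p q : ℝ} (h1 : p < -1) (h2 : Real.sqrt 3 - 2 < q)
    (h3 : q ≤ Real.sqrt 3) : (p, q) ∈ calI :=
  Or.inr ⟨h1, h2, h3⟩

lemma core {x y : ℝ} (hx : Irrational x) (hy : Irrational y) (hxy : x ≠ y)
    (hx1 : 1 < x) (hy1 : |y| < 1)
    (hcon : ∀ g : Matrix (Fin 2) (Fin 2) ℤ, InTheta g → (mob g x, mob g y) ∉ calI) : False := by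
  have inv := invariant hx hy hxy
  have hs3 : Real.sqrt 3 ^ 2 = 3 := Real.sq_sqrt (by norm_num)
  have hs30 : 0 ≤ Real.sqrt 3 := Real.sqrt_nonneg 3
  have hs3a : 1 < Real.sqrt 3 := by nlinarith
  have hs3b : Real.sqrt 3 < 2 := by nlinarith
  have step : ∀ n, 1 < seqX x n → |seqY x y n| < 1 →
      (1 ≤ round (seqX x n / 2) ∧ (0 < seqY x y (n+1) ∧ seqY x y (n+1) < 1) ∧ 1 < seqX x (n+1)) := by
    intro n hXn hYn
    have hrabs := round_abs_lt (inv n).1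
    have ha : 1 ≤ round (seqX x n / 2) := by
      have h2a : (0:ℝ) < 2 * (round (seqX x n / 2) : ℝ) := by
        have := abs_lt.mp hrabs
        linarith [this.2]
      have h0 : (0:ℤ) < round (seqX x n / 2) := by
        exact_mod_cast (by linarith : (0:ℝ) < (round (seqX x n / 2) : ℝ))
      omega
    have haR : (1:ℝ) ≤ (round (seqX x n / 2) : ℝ) := by exact_mod_cast ha
    have hs_lt : seqY x y n - 2 * (round (seqX x n / 2) : ℝ) < -1 := by
      have := abs_lt.mp hYn
      linarith
    have hYpos : 0 < seqY x y (n+1) ∧ seqY x y (n+1) < 1 := by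
      have e2 : seqY x y (n+1) = -((seqY x y n - 2 * (round (seqX x n / 2) : ℝ))⁻¹) := rfl
      rw [e2]
      set sn := seqY x y n - 2 * (round (seqX x n / 2) : ℝ) with hsn
      have h1 : 1 < -sn := by linarith
      constructor
      · rw [← inv_neg]
        exact inv_pos.mpr (by linarith)
      · rw [← inv_neg]
        exact inv_lt_one_of_one_lt₀ h1
    have hXabs : 1 < |seqX x (n+1)| := xabs_gt_one hx n
    have hX1 : 1 < seqX x (n+1) := by
      rcases lt_abs.mp hXabs with h | h
      · exact h
      · exfalso
        apply hcon (seqG x (n+1)) (inv (n+1)).2.2.2.1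
        rw [(inv (n+1)).2.2.2.2.1, (inv (n+1)).2.2.2.2.2]
        exact mem_calI_right (by linarith) (by linarith [hYpos.1]) (by linarith [hYpos.2])
    exact ⟨ha, hYpos, hX1⟩
  have P : ∀ n, 1 < seqX x n ∧ |seqY x y n| < 1 := by
    intro n
    induction n with
    | zero => exact ⟨hx1, hy1⟩
    | succ n ih =>
      obtain ⟨_, hY', hX'⟩ := step n ih.1 ih.2
      exact ⟨hX', by rw [abs_lt]; constructor <;> linarith [hY'.1, hY'.2]⟩
  have Ppos : ∀ n, 0 < seqY x y (n+1) ∧ seqY x y (n+1) < 1 :=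
    fun n => (step n (P n).1 (P n).2).2.1
  have hA1 : ∀ n, round (seqX x (n+1) / 2) = 1 := by
    intro n
    have ha := (step (n+1) (P (n+1)).1 (P (n+1)).2).1
    by_contra hne2
    have ha2 : 2 ≤ round (seqX x (n+1) / 2) := by omega
    have hrabs := round_abs_lt (inv (n+1)).1
    have hX3 : 3 < seqX x (n+1) := by
      have h4 : (2:ℝ) ≤ (round (seqX x (n+1) / 2) : ℝ) := by exact_mod_cast ha2
      have := abs_lt.mp hrabs
      linarith [this.1]
    have hy01 := Ppos n
    rcases lt_or_ge (seqY x y (n+1)) (2 - Real.sqrt 3) with hc | hc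
    · apply hcon (seqG x (n+1)) (inv (n+1)).2.2.2.1
      rw [(inv (n+1)).2.2.2.2.1, (inv (n+1)).2.2.2.2.2]
      exact mem_calI_left (by linarith) (by linarith [hy01.1]) (by linarith)
    · have hTheta : InTheta (Tmat (-2) * seqG x (n+1)) :=
        intheta_mul (intheta_T (-2) (by norm_num)) (inv (n+1)).2.2.2.1
      apply hcon _ hTheta
      have hdx := den_ne (inv (n+1)).2.2.2.1 hx
      have hdy := den_ne (inv (n+1)).2.2.2.1 hy
      rw [mob_T (-2) hdx, mob_T (-2) hdy, (inv (n+1)).2.2.2.2.1, (inv (n+1)).2.2.2.2.2]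
      push_cast
      refine mem_calI_left (by linarith) (by linarith) (by linarith [hy01.2])
  have hX2 : ∀ n, seqX x (n+1) < 2 := by
    intro n
    have e : seqX x (n+2) = -((seqX x (n+1) - 2 * ((round (seqX x (n+1) / 2)) : ℝ))⁻¹) := rfl
    rw [hA1 n] at e
    norm_num at e
    have hpos : 0 < seqX x (n+2) := by linarith [(P (n+2)).1]
    have hneg : (seqX x (n+1) - 2)⁻¹ < 0 := by
      rw [e] at hpos
      linarith
    have := inv_lt_zero.mp hneg
    linarith
  apply descent (fun n => (seqX x (n+1) - 1)⁻¹)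
  · intro n
    show (seqX x (n+2) - 1)⁻¹ ≤ (seqX x (n+1) - 1)⁻¹ - 1
    have hlt := (P (n+1)).1
    have hlt2 := hX2 n
    have e1 : seqX x (n+2) = (2 - seqX x (n+1))⁻¹ := by
      have e : seqX x (n+2) = -((seqX x (n+1) - 2 * ((round (seqX x (n+1) / 2)) : ℝ))⁻¹) := rfl
      rw [hA1 n] at e
      norm_num at e
      rw [e, show (2 - seqX x (n+1)) = -(seqX x (n+1) - 2) by ring, inv_neg]
    rw [e1]
    have h1 : seqX x (n+1) - 1 ≠ 0 := by linarith
    have h2 : 2 - seqX x (n+1) ≠ 0 := by linarith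
    have key : ((2 - seqX x (n+1))⁻¹ - 1) = (seqX x (n+1) - 1) / (2 - seqX x (n+1)) := by
      field_simp
      ring
    have key2 : (seqX x (n+1) - 1)⁻¹ - 1 = (2 - seqX x (n+1)) / (seqX x (n+1) - 1) := by
      field_simp
      ring
    rw [key, inv_div, key2]
  · intro n
    show 0 < (seqX x (n+1) - 1)⁻¹
    exact inv_pos.mpr (by linarith [(P (n+1)).1])


def conjD (g : Matrix (Fin 2) (Fin 2) ℤ) : Matrix (Fin 2) (Fin 2) ℤ :=
  !![g 0 0, -(g 0 1); -(g 1 0), g 1 1]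

lemma conjD_entries (g : Matrix (Fin 2) (Fin 2) ℤ) :
    conjD g 0 0 = g 0 0 ∧ conjD g 0 1 = -(g 0 1) ∧ conjD g 1 0 = -(g 1 0) ∧ conjD g 1 1 = g 1 1 := by
  refine ⟨?_, ?_, ?_, ?_⟩ <;> simp [conjD, Matrix.cons_val_one, Matrix.head_cons]

lemma intheta_conjD {g : Matrix (Fin 2) (Fin 2) ℤ} (hg : InTheta g) : InTheta (conjD g) := by
  obtain ⟨e0, e1, e2, e3⟩ := conjD_entries g
  obtain ⟨hdet, hpar⟩ := hg
  rw [Matrix.det_fin_two] at hdet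
  constructor
  · rw [Matrix.det_fin_two, e0, e1, e2, e3]
    linear_combination hdet
  · rw [e0, e1, e2, e3]
    rcases hpar with ⟨h1, h2, h3, h4⟩ | ⟨h1, h2, h3, h4⟩
    · left; refine ⟨h1, ?_, ?_, h4⟩ <;> omega
    · right; refine ⟨h1, ?_, ?_, h4⟩ <;> omega

lemma mob_conjD (g : Matrix (Fin 2) (Fin 2) ℤ) (x : ℝ) :
    mob (conjD g) x = -(mob g (-x)) := by
  obtain ⟨e0, e1, e2, e3⟩ := conjD_entries g
  rw [mob, mob, e0, e1, e2, e3, ← neg_div]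
  push_cast
  congr 1 <;> ring

lemma calI_neg {p q : ℝ} (h : (p, q) ∈ calI) : (-p, -q) ∈ calI := by
  rcases h with ⟨h1, h2⟩ | ⟨h1, h2⟩
  · rw [Set.mem_Ioi] at h1
    rw [Set.mem_Ico] at h2
    exact mem_calI_right (by linarith) (by linarith [h2.2]) (by linarith [h2.1])
  · rw [Set.mem_Iio] at h1
    rw [Set.mem_Ioc] at h2
    exact mem_calI_left (by linarith) (by linarith [h2.2]) (by linarith [h2.1])

end TG

/-- any pair of distinct irrationals can be moved into `𝓘` by an
element of the theta group. -/
theorem exists_theta_element_into_calI :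
    ∀ α β : ℝ, Irrational α → Irrational β → α ≠ β →
      ∃ g : Matrix (Fin 2) (Fin 2) ℤ, InTheta g ∧
        (((g 0 0 : ℝ) * α + (g 0 1 : ℝ)) / ((g 1 0 : ℝ) * α + (g 1 1 : ℝ)),
         ((g 0 0 : ℝ) * β + (g 0 1 : ℝ)) / ((g 1 0 : ℝ) * β + (g 1 1 : ℝ))) ∈ calI := by
  intro α β hα hβ hne
  by_contra hcon
  push_neg at hcon
  obtain ⟨N, hN1, hNy⟩ := TG.lemA hα hβ hne
  obtain ⟨hXirr, hYirr, hXYne, hGN, hmx, hmy⟩ := TG.invariant hα hβ hne N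
  have hdx := TG.den_ne hGN hα
  have hdy := TG.den_ne hGN hβ
  have hXabs : 1 < |TG.seqX α N| := by
    obtain ⟨m, rfl⟩ : ∃ m, N = m + 1 := ⟨N - 1, by omega⟩
    exact TG.xabs_gt_one hα m
  rcases lt_abs.mp hXabs with hpos | hneg
  · refine TG.core hXirr hYirr hXYne hpos hNy ?_
    intro h hTheta hmem
    have hg : InTheta (h * TG.seqG α N) := TG.intheta_mul hTheta hGN
    have h2x : (h 1 0 : ℝ) * TG.mob (TG.seqG α N) α + (h 1 1 : ℝ) ≠ 0 := by
      rw [hmx]; exact TG.den_ne hTheta hXirr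
    have h2y : (h 1 0 : ℝ) * TG.mob (TG.seqG α N) β + (h 1 1 : ℝ) ≠ 0 := by
      rw [hmy]; exact TG.den_ne hTheta hYirr
    have e1 : TG.mob (h * TG.seqG α N) α = TG.mob h (TG.seqX α N) := by
      rw [TG.mob_mul _ _ _ hdx h2x, hmx]; rfl
    have e2 : TG.mob (h * TG.seqG α N) β = TG.mob h (TG.seqY α β N) := by
      rw [TG.mob_mul _ _ _ hdy h2y, hmy]; rfl
    apply hcon (h * TG.seqG α N) hg
    show (TG.mob (h * TG.seqG α N) α, TG.mob (h * TG.seqG α N) β) ∈ calI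
    rw [e1, e2]
    exact hmem
  · refine TG.core hXirr.neg hYirr.neg (fun hEq => hXYne (neg_injective hEq)) hneg
      (by rwa [abs_neg]) ?_
    intro h hTheta hmem
    have hg : InTheta (TG.conjD h * TG.seqG α N) :=
      TG.intheta_mul (TG.intheta_conjD hTheta) hGN
    have h2x : ((TG.conjD h) 1 0 : ℝ) * TG.mob (TG.seqG α N) α + ((TG.conjD h) 1 1 : ℝ) ≠ 0 := by
      rw [hmx]; exact TG.den_ne (TG.intheta_conjD hTheta) hXirr
    have h2y : ((TG.conjD h) 1 0 : ℝ) * TG.mob (TG.seqG α N) β + ((TG.conjD h) 1 1 : ℝ) ≠ 0 := by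
      rw [hmy]; exact TG.den_ne (TG.intheta_conjD hTheta) hYirr
    have e1 : TG.mob (TG.conjD h * TG.seqG α N) α = -(TG.mob h (-(TG.seqX α N))) := by
      rw [TG.mob_mul _ _ _ hdx h2x, hmx, ← TG.mob_conjD h (TG.seqX α N)]; rfl
    have e2 : TG.mob (TG.conjD h * TG.seqG α N) β = -(TG.mob h (-(TG.seqY α β N))) := by
      rw [TG.mob_mul _ _ _ hdy h2y, hmy, ← TG.mob_conjD h (TG.seqY α β N)]; rfl
    apply hcon (TG.conjD h * TG.seqG α N) hg
    show (TG.mob (TG.conjD h * TG.seqG α N) α, TG.mob (TG.conjD h * TG.seqG α N) β) ∈ calI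
    rw [e1, e2]
    exact TG.calI_neg hmem


end SCF
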